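/- Fix real numbers η ∈ (0,1) and L > 1, a time horizon T, and n experts with n ≤ ηLT. Suppose that in every round t of a subset T₀ ⊆ [T] the weighted sum ∑_{j ∈ V_t, ŷ_t^{(j)}=1} 2^{η d_t^{(j)}} is strictly less than L, where d_t^{(j)} counts the rounds in T₀ before t in which expert j predicted 1. For each expert j let D_j be its final distance, and for each d ∈ ℕ let n_d be the number of experts j with D_j ∈ [d/η, (d+1)/η]. Then ∑_{d ∈ ℕ} n_d · 2^d ≤ 3ηTL. -/

import Mathlib

open Finset

lemma rank_sum' {α : Type*} [LinearOrder α] (r : ℝ) (s : Finset α) :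
    ∑ t ∈ s, r ^ (s.filter (fun t' => t' < t)).card = ∑ k ∈ Finset.range s.card, r ^ k := by
  classical
  induction s using Finset.induction_on_max with
  | empty => simp
  | insert a s ha ih =>
    have hna : a ∉ s := fun h => lt_irrefl a (ha a h)
    rw [Finset.sum_insert hna]
    have h1 : (insert a s).filter (fun t' => t' < a) = s := by
      ext x
      simp only [Finset.mem_filter, Finset.mem_insert]
      constructor
      · rintro ⟨(rfl | hx), hlt⟩
        · exact absurd hlt (lt_irrefl _)
        · exact hx
      · intro hx; exact ⟨Or.inr hx, ha x hx⟩
    have h2 : ∀ t ∈ s, ((insert a s).filter (fun t' => t' < t)).card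
        = (s.filter (fun t' => t' < t)).card := by
      intro t ht
      congr 1
      ext x
      simp only [Finset.mem_filter, Finset.mem_insert]
      constructor
      · rintro ⟨(rfl | hx), hlt⟩
        · exact absurd (hlt.trans (ha t ht)) (lt_irrefl _)
        · exact ⟨hx, hlt⟩
      · rintro ⟨hx, hlt⟩; exact ⟨Or.inr hx, hlt⟩
    rw [h1, Finset.card_insert_of_notMem hna, Finset.sum_range_succ,
      Finset.sum_congr rfl (fun t ht => by rw [h2 t ht]), ih]
    ring

theorem experts_realizable_helper
    (n T : ℕ) (η L : ℝ) (hη : η ∈ Set.Ioo (0 : ℝ) 1) (hL : 1 < L)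
    (hn : (n : ℝ) ≤ η * L * T)
    (T₀ : Finset (Fin T)) (p : Fin T → Fin n → Bool)
    (V : ℕ → Finset (Fin n))
    (hV0 : V 0 = Finset.univ)
    (hVmono : ∀ t : Fin T, V (t.val + 1) ⊆ V t.val)
    (hVkeep : ∀ t ∈ T₀, V (t.val + 1) = V t.val)
    (dist : Fin T → Fin n → ℕ)
    (hdist : ∀ t j, dist t j = (T₀.filter (fun t' => t'.val < t.val ∧ p t' j = true)).card)
    (hthresh : ∀ t ∈ T₀,
      ∑ j ∈ (V t.val).filter (fun j => p t j = true), (2 : ℝ) ^ (η * dist t j) < L)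
    (D : Fin n → ℕ)
    (hD : ∀ j, D j = (T₀.filter (fun t => p t j = true ∧ j ∈ V t.val)).card)
    (nd : ℕ → ℕ)
    (hnd : ∀ d : ℕ, nd d =
      (Finset.univ.filter (fun j : Fin n =>
        (d : ℝ) / η ≤ (D j : ℝ) ∧ (D j : ℝ) ≤ ((d : ℝ) + 1) / η)).card) :
    ∑' d : ℕ, (nd d : ℝ) * 2 ^ d ≤ 3 * η * T * L := by
  classical
  obtain ⟨hη0, hη1⟩ := hη
  have hL0 : (0 : ℝ) < L := lt_trans one_pos hL
  set r : ℝ := (2 : ℝ) ^ η with hrdef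
  have hpow : ∀ k : ℕ, (2 : ℝ) ^ (η * (k : ℝ)) = r ^ k := by
    intro k
    rw [Real.rpow_mul (by norm_num), Real.rpow_natCast]
  have hr1 : (1 : ℝ) ≤ r := Real.one_le_rpow (by norm_num) hη0.le
  have hr0 : (0 : ℝ) ≤ r := le_trans zero_le_one hr1
  have hrle : r ≤ 1 + η := by
    have h := rpow_one_add_le_one_add_mul_self (s := (1:ℝ)) (by norm_num) hη0.le hη1.le
    norm_num at h
    rw [hrdef]
    linarith
  -- final distances are bounded by T
  have hDT : ∀ j, D j ≤ T := by
    intro j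
    rw [hD]
    calc (T₀.filter _).card ≤ T₀.card := Finset.card_filter_le _ _
      _ ≤ (Finset.univ : Finset (Fin T)).card := Finset.card_le_univ _
      _ = T := by simp
  have hT₀T : (T₀.card : ℝ) ≤ T := by
    have : T₀.card ≤ T := le_trans (Finset.card_le_univ _) (by simp)
    exact_mod_cast this
  -- the set of rounds counted for expert j
  set A : Fin n → Finset (Fin T) :=
    fun j => T₀.filter (fun t => p t j = true ∧ j ∈ V t.val) with hA
  -- rank ≤ dist
  have hrank : ∀ j, ∀ t ∈ A j, ((A j).filter (fun t' => t' < t)).card ≤ dist t j := by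
    intro j t _
    rw [hdist]
    apply Finset.card_le_card
    intro x hx
    simp only [hA, Finset.mem_filter] at hx ⊢
    exact ⟨hx.1.1, hx.2, hx.1.2.1⟩
  -- key per-expert bound
  have hkey : ∀ j : Fin n, r ^ (D j) ≤ 1 + η * ∑ t ∈ A j, r ^ (dist t j) := by
    intro j
    have hgeom : (∑ k ∈ Finset.range (D j), r ^ k) * (r - 1) = r ^ (D j) - 1 :=
      geom_sum_mul r (D j)
    have hG0 : (0 : ℝ) ≤ ∑ k ∈ Finset.range (D j), r ^ k :=
      Finset.sum_nonneg fun k _ => pow_nonneg hr0 k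
    have hGS : (∑ k ∈ Finset.range (D j), r ^ k) ≤ ∑ t ∈ A j, r ^ (dist t j) := by
      rw [hD j,
        show (T₀.filter (fun t => p t j = true ∧ j ∈ V t.val)).card = (A j).card from rfl,
        ← rank_sum' r (A j)]
      exact Finset.sum_le_sum fun t ht =>
        pow_le_pow_right₀ hr1 (hrank j t ht)
    have : r ^ (D j) - 1 ≤ η * ∑ t ∈ A j, r ^ (dist t j) := by
      rw [← hgeom]
      calc (∑ k ∈ Finset.range (D j), r ^ k) * (r - 1)
          ≤ (∑ k ∈ Finset.range (D j), r ^ k) * η := by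
            apply mul_le_mul_of_nonneg_left _ hG0
            linarith
        _ ≤ (∑ t ∈ A j, r ^ (dist t j)) * η := by
            apply mul_le_mul_of_nonneg_right hGS hη0.le
        _ = η * ∑ t ∈ A j, r ^ (dist t j) := mul_comm _ _
    linarith
  -- sum over experts
  have hsum : ∑ j : Fin n, r ^ (D j) ≤ (n : ℝ) + η * (T₀.card * L) := by
    have hswap : ∑ j : Fin n, ∑ t ∈ A j, r ^ (dist t j)
        = ∑ t ∈ T₀, ∑ j ∈ (V t.val).filter (fun j => p t j = true), r ^ (dist t j) := by
      have h1 : ∀ j : Fin n, ∑ t ∈ A j, r ^ (dist t j)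
          = ∑ t ∈ T₀, if p t j = true ∧ j ∈ V t.val then r ^ (dist t j) else 0 := by
        intro j; rw [hA, Finset.sum_filter]
      rw [Finset.sum_congr rfl fun j _ => h1 j, Finset.sum_comm]
      apply Finset.sum_congr rfl
      intro t _
      rw [← Finset.sum_filter]
      apply Finset.sum_congr _ fun _ _ => rfl
      ext j
      simp only [Finset.mem_filter, Finset.mem_univ, true_and]
      tauto
    have hthresh' : ∑ t ∈ T₀, ∑ j ∈ (V t.val).filter (fun j => p t j = true),
        r ^ (dist t j) ≤ T₀.card * L := by
      rw [Finset.card_eq_sum_ones T₀]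
      push_cast
      rw [Finset.sum_mul]
      apply Finset.sum_le_sum
      intro t ht
      have := (hthresh t ht).le
      rw [one_mul]
      calc ∑ j ∈ (V t.val).filter (fun j => p t j = true), r ^ (dist t j)
          = ∑ j ∈ (V t.val).filter (fun j => p t j = true), (2:ℝ) ^ (η * dist t j) :=
            Finset.sum_congr rfl fun j _ => (hpow (dist t j)).symm
        _ ≤ L := this
    calc ∑ j : Fin n, r ^ (D j)
        ≤ ∑ j : Fin n, (1 + η * ∑ t ∈ A j, r ^ (dist t j)) :=
          Finset.sum_le_sum fun j _ => hkey j
      _ = (n : ℝ) + η * ∑ j : Fin n, ∑ t ∈ A j, r ^ (dist t j) := by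
          rw [Finset.sum_add_distrib, ← Finset.mul_sum]
          simp
      _ ≤ (n : ℝ) + η * (T₀.card * L) := by
          have := hswap ▸ hthresh'
          nlinarith [hη0.le]
  -- nd vanishes for d ≥ T
  have hnd0 : ∀ d : ℕ, T ≤ d → ((nd d : ℝ) * 2 ^ d) = 0 := by
    intro d hd
    rw [hnd]
    suffices h : Finset.univ.filter (fun j : Fin n =>
        (d : ℝ) / η ≤ (D j : ℝ) ∧ (D j : ℝ) ≤ ((d : ℝ) + 1) / η) = ∅ by
      rw [h]; simp
    rw [Finset.filter_eq_empty_iff]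
    rintro j - ⟨h1, _⟩
    have hdle : (d : ℝ) ≤ η * D j := by
      rw [div_le_iff₀ hη0] at h1; linarith [h1]
    have hDj : (D j : ℝ) ≤ T := by exact_mod_cast hDT j
    have hT0 : 0 < T := by
      by_contra hT
      push_neg at hT
      interval_cases T
      have : (n : ℝ) ≤ 0 := by simpa using hn
      have : n = 0 := by exact_mod_cast le_antisymm (by exact_mod_cast this) (Nat.zero_le n)
      exact absurd (this ▸ j).isLt (by simp [this])
    have : (T : ℝ) ≤ η * T := by
      calc (T : ℝ) ≤ (d : ℝ) := by exact_mod_cast hd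
        _ ≤ η * D j := hdle
        _ ≤ η * T := by nlinarith
    nlinarith [show (0:ℝ) < T by exact_mod_cast hT0]
  -- reduce tsum to finite sum
  have htsum : ∑' d : ℕ, (nd d : ℝ) * 2 ^ d
      = ∑ d ∈ Finset.range T, (nd d : ℝ) * 2 ^ d := by
    apply tsum_eq_sum
    intro d hd
    exact hnd0 d (by simpa using hd)
  rw [htsum]
  -- swap sum over d and experts, bound each expert by (3/2) r^(D j)
  have hdsum : ∑ d ∈ Finset.range T, (nd d : ℝ) * 2 ^ d
      ≤ ∑ j : Fin n, (3 / 2 : ℝ) * r ^ (D j) := by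
    have h1 : ∀ d, (nd d : ℝ) * 2 ^ d = ∑ j : Fin n,
        if (d : ℝ) / η ≤ (D j : ℝ) ∧ (D j : ℝ) ≤ ((d : ℝ) + 1) / η then (2:ℝ) ^ d else 0 := by
      intro d
      rw [eq_comm, ← Finset.sum_filter, hnd, Finset.sum_const, nsmul_eq_mul]
    have hperj : ∀ j : Fin n,
        ∑ d ∈ (Finset.range T).filter
          (fun d : ℕ => (d : ℝ) / η ≤ (D j : ℝ) ∧ (D j : ℝ) ≤ ((d : ℝ) + 1) / η), (2:ℝ) ^ d
        ≤ (3/2 : ℝ) * r ^ (D j) := by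
      intro j
      set m : ℕ := ⌊η * (D j : ℝ)⌋₊ with hm
      have hDnn : (0:ℝ) ≤ η * (D j : ℝ) := by positivity
      have hsubset : (Finset.range T).filter
          (fun d : ℕ => (d : ℝ) / η ≤ (D j : ℝ) ∧ (D j : ℝ) ≤ ((d : ℝ) + 1) / η)
          ⊆ insert (m - 1) {m} := by
        intro d hd
        simp only [Finset.mem_filter, Finset.mem_range] at hd
        obtain ⟨-, h1, h2⟩ := hd
        have hd1 : (d : ℝ) ≤ η * (D j : ℝ) := by
          rw [div_le_iff₀ hη0] at h1; linarith
        have hd2 : η * (D j : ℝ) ≤ (d : ℝ) + 1 := by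
          rw [le_div_iff₀ hη0] at h2; linarith
        have hdm : d ≤ m := Nat.le_floor hd1
        have hmd : m ≤ d + 1 := by
          have := Nat.floor_le_floor (R := ℝ) hd2
          rwa [show ((d:ℝ) + 1) = ((d + 1 : ℕ) : ℝ) by push_cast; ring,
            Nat.floor_natCast] at this
        simp only [Finset.mem_insert, Finset.mem_singleton]
        omega
      have h2m : (2:ℝ) ^ m ≤ r ^ (D j) := by
        have h1 : ((2:ℝ)) ^ ((m:ℕ):ℝ) ≤ (2:ℝ) ^ (η * (D j : ℝ)) := by
          apply Real.rpow_le_rpow_of_exponent_le (by norm_num)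
          exact Nat.floor_le hDnn
        rw [Real.rpow_natCast] at h1
        rwa [hpow (D j)] at h1
      have hpair : ∑ d ∈ insert (m - 1) ({m} : Finset ℕ), (2:ℝ) ^ d
          ≤ (3/2 : ℝ) * 2 ^ m := by
        rcases Nat.eq_zero_or_pos m with hm0 | hm0
        · rw [hm0, show (0:ℕ) - 1 = 0 from rfl,
            Finset.insert_eq_self.mpr (Finset.mem_singleton_self 0),
            Finset.sum_singleton]
          norm_num
        · have hne : m - 1 ∉ ({m} : Finset ℕ) := by
            simp only [Finset.mem_singleton]; omega
          rw [Finset.sum_insert hne, Finset.sum_singleton]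
          have h2 : (2:ℝ) ^ m = 2 * 2 ^ (m - 1) := by
            rw [← pow_succ']
            congr 1
            omega
          rw [h2]; ring_nf
          nlinarith [pow_nonneg (show (0:ℝ) ≤ 2 by norm_num) (m-1)]
      calc ∑ d ∈ (Finset.range T).filter
            (fun d : ℕ => (d : ℝ) / η ≤ (D j : ℝ) ∧ (D j : ℝ) ≤ ((d : ℝ) + 1) / η), (2:ℝ) ^ d
          ≤ ∑ d ∈ insert (m - 1) ({m} : Finset ℕ), (2:ℝ) ^ d :=
            Finset.sum_le_sum_of_subset_of_nonneg hsubset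
              (fun d _ _ => by positivity)
        _ ≤ (3/2 : ℝ) * 2 ^ m := hpair
        _ ≤ (3/2 : ℝ) * r ^ (D j) := by linarith
    calc ∑ d ∈ Finset.range T, (nd d : ℝ) * 2 ^ d
        = ∑ d ∈ Finset.range T, ∑ j : Fin n,
            if (d : ℝ) / η ≤ (D j : ℝ) ∧ (D j : ℝ) ≤ ((d : ℝ) + 1) / η then (2:ℝ) ^ d else 0 :=
          Finset.sum_congr rfl fun d _ => h1 d
      _ = ∑ j : Fin n, ∑ d ∈ Finset.range T,
            if (d : ℝ) / η ≤ (D j : ℝ) ∧ (D j : ℝ) ≤ ((d : ℝ) + 1) / η then (2:ℝ) ^ d else 0 :=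
          Finset.sum_comm
      _ = ∑ j : Fin n, ∑ d ∈ (Finset.range T).filter
            (fun d : ℕ => (d : ℝ) / η ≤ (D j : ℝ) ∧ (D j : ℝ) ≤ ((d : ℝ) + 1) / η), (2:ℝ) ^ d :=
          Finset.sum_congr rfl fun j _ => (Finset.sum_filter _ _).symm
      _ ≤ ∑ j : Fin n, (3 / 2 : ℝ) * r ^ (D j) := Finset.sum_le_sum fun j _ => hperj j
  have hfinal : ∑ j : Fin n, (3 / 2 : ℝ) * r ^ (D j) ≤ 3 * η * T * L := by
    rw [← Finset.mul_sum]
    have hcard : η * ((T₀.card : ℝ) * L) ≤ η * T * L := by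
      have h := mul_le_mul_of_nonneg_left
        (mul_le_mul_of_nonneg_right hT₀T hL0.le) hη0.le
      nlinarith [h]
    calc (3/2 : ℝ) * ∑ j : Fin n, r ^ (D j)
        ≤ (3/2 : ℝ) * ((n : ℝ) + η * (T₀.card * L)) := by
          have h0 : (0:ℝ) ≤ 3/2 := by norm_num
          exact mul_le_mul_of_nonneg_left hsum h0
      _ ≤ (3/2 : ℝ) * (η * L * T + η * T * L) := by nlinarith
      _ = 3 * η * T * L := by ring
  linarith
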